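/- Let S be a monoid with identity λ acting by endomorphisms on a meet-semilattice E with greatest element 1, and consider the F-restriction semigroup E ⋊ S (in which m((e,s)) = (1,s)). Then the following are equivalent: (a) E ⋊ S is strong; (b) E ⋊ S is perfect; (c) s·1 = 1 for all s ∈ S. -/
import Mathlib


/-- Multiplication of the semidirect product `E ⋊ S`:
`(e,s)(f,t) = (e ⊓ s·f, st)`. -/
def sdMul {S E : Type*} [Monoid S] [SemilatticeInf E] (act : S → E → E)
    (p q : E × S) : E × S :=
  (p.1 ⊓ act p.2 q.1, p.2 * q.2)

/-- The unary operation of the semidirect product: `(e,s)⁺ = (e,λ)`. -/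
def sdPlus {S E : Type*} [Monoid S] (p : E × S) : E × S := (p.1, 1)

/-- The maximum element of the σ-class of `(e,s)` in `E ⋊ S`: `m((e,s)) = (⊤,s)`. -/
def sdM {S E : Type*} [Monoid S] [SemilatticeInf E] [OrderTop E] (p : E × S) : E × S := ((⊤ : E), p.2)

/-- For a monoid `S` acting by endomorphisms on a meet-semilattice
`E` with greatest element `1`, the F-restriction semigroup `E ⋊ S`
(with `m((e,s)) = (1,s)` and maximum projection `(1,λ)`) is strong iff it is
perfect iff `s·1 = 1` for all `s ∈ S`. -/
theorem stmt_8 {S E : Type*} [Monoid S] [SemilatticeInf E] [OrderTop E]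
    (act : S → E → E)
    (hact1 : ∀ (s t : S) (e : E), act (s * t) e = act s (act t e))
    (hact2 : ∀ e : E, act 1 e = e)
    (hact3 : ∀ (s : S) (e f : E), act s (e ⊓ f) = act s e ⊓ act s f) :
    -- (a) strong ↔ (b) perfect:
    ((∀ p q : E × S, sdMul act (sdM p) (sdM q) =
        sdMul act (sdPlus (sdM p)) (sdM (sdMul act p q))) ↔
      ((∀ p q : E × S, sdMul act (sdM p) (sdM q) = sdM (sdMul act p q)) ∧
        (∀ p : E × S, sdPlus (sdM p) = ((⊤ : E), (1 : S))))) ∧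
    -- (b) perfect ↔ (c) s·1 = 1 for all s:
    (((∀ p q : E × S, sdMul act (sdM p) (sdM q) = sdM (sdMul act p q)) ∧
        (∀ p : E × S, sdPlus (sdM p) = ((⊤ : E), (1 : S)))) ↔
      (∀ s : S, act s (⊤ : E) = (⊤ : E))) := by
  have key : ∀ P : Prop, (P ↔ (∀ s : S, act s (⊤ : E) = ⊤)) →
      ∀ Q : Prop, (Q ↔ (∀ s : S, act s (⊤ : E) = ⊤)) → (P ↔ Q) := by
    intro P hP Q hQ; rw [hP, hQ]
  have hA : (∀ p q : E × S, sdMul act (sdM p) (sdM q) =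
      sdMul act (sdPlus (sdM p)) (sdM (sdMul act p q))) ↔
      (∀ s : S, act s (⊤ : E) = ⊤) := by
    constructor
    · intro h s
      have := h ((⊤ : E), s) ((⊤ : E), (1 : S))
      simp only [sdMul, sdM, sdPlus, Prod.mk.injEq] at this
      have h1 := this.1
      rw [hact2] at h1
      simpa using h1
    · intro h p q
      simp [sdMul, sdM, sdPlus, h, hact2]
  have hB : ((∀ p q : E × S, sdMul act (sdM p) (sdM q) = sdM (sdMul act p q)) ∧
      (∀ p : E × S, sdPlus (sdM p) = ((⊤ : E), (1 : S)))) ↔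
      (∀ s : S, act s (⊤ : E) = ⊤) := by
    constructor
    · intro h s
      have := h.1 ((⊤ : E), s) ((⊤ : E), (1 : S))
      simp only [sdMul, sdM, Prod.mk.injEq] at this
      simpa using this.1
    · intro h
      refine ⟨fun p q => ?_, fun p => ?_⟩
      · simp [sdMul, sdM, h]
      · simp [sdPlus, sdM]
  exact ⟨key _ hA _ hB, hB⟩
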